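/- Let γ^{(1)}, …, γ^{(ℓ)} be Chern characters with r^{(i)} > 0 for all i, and set γ = Σᵢ γ^{(i)} and r = Σᵢ r^{(i)}. Then r·Δ(γ) = Σ_{i=1}^{ℓ} r^{(i)}·Δ(γ^{(i)}) − Σ_{i=2}^{ℓ} (1/(2 r^{(i)})) · (1/((Σ_{j=1}^{i} r^{(j)})·(Σ_{k=1}^{i−1} r^{(k)}))) · (ξᵢ · ξᵢ), where ξᵢ = Σ_{j=1}^{i−1} (r^{(i)} γ₁^{(j)} − r^{(j)} γ₁^{(i)}). -/

import Mathlib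

/-- The discriminant `Δ(γ) = (γ₁·γ₁)/(2r²) − γ₂/r`. -/
def disc {V : Type*} [AddCommGroup V] [Module ℚ V]
    (B : V →ₗ[ℚ] V →ₗ[ℚ] ℚ) (γ : ℚ × V × ℚ) : ℚ :=
  B γ.2.1 γ.2.1 / (2 * γ.1 ^ 2) - γ.2.2 / γ.1

private lemma natIic_eq_range (m : ℕ) : Finset.Iic m = Finset.range (m + 1) := by
  ext k; simp [Nat.lt_succ_iff]

private lemma sum_Iio_fin {M : Type*} [AddCommMonoid M] {n : ℕ} (f : ℕ → M) (i : Fin n) :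
    ∑ j ∈ Finset.Iio i, f j.val = ∑ k ∈ Finset.range i.val, f k := by
  have h := Finset.sum_map (Finset.Iio i) Fin.valEmbedding f
  rw [Fin.map_valEmbedding_Iio] at h
  simp only [Fin.valEmbedding_apply] at h
  rw [← h, Nat.Iio_eq_range]

private lemma sum_Iic_fin {M : Type*} [AddCommMonoid M] {n : ℕ} (f : ℕ → M) (i : Fin n) :
    ∑ j ∈ Finset.Iic i, f j.val = ∑ k ∈ Finset.range (i.val + 1), f k := by
  have h := Finset.sum_map (Finset.Iic i) Fin.valEmbedding f
  rw [Fin.map_valEmbedding_Iic] at h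
  simp only [Fin.valEmbedding_apply] at h
  rw [← h, natIic_eq_range]

private lemma key {V : Type*} [AddCommGroup V] [Module ℚ V]
    (B : V →ₗ[ℚ] V →ₗ[ℚ] ℚ) (hB : ∀ a b, B a b = B b a)
    (R : ℕ → ℚ) (C : ℕ → V) (hR : ∀ k, 0 < R k) :
    ∀ n, 1 ≤ n →
    B (∑ k ∈ Finset.range n, C k) (∑ k ∈ Finset.range n, C k) / (2 * ∑ k ∈ Finset.range n, R k)
      = (∑ k ∈ Finset.range n, B (C k) (C k) / (2 * R k))
        - ∑ k ∈ Finset.range n, (if 0 < k then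
            (1 / (2 * R k)) * (1 / ((∑ j ∈ Finset.range (k + 1), R j) * (∑ j ∈ Finset.range k, R j)))
              * B (∑ j ∈ Finset.range k, (R k • C j - R j • C k))
                  (∑ j ∈ Finset.range k, (R k • C j - R j • C k))
          else 0) := by
  intro n hn
  induction n, hn using Nat.le_induction with
  | base => simp [Finset.sum_range_one]
  | succ n hn IH =>
    have hS : 0 < ∑ k ∈ Finset.range n, R k :=
      Finset.sum_pos (fun k _ => hR k) (Finset.nonempty_range_iff.mpr (by omega))
    set S := ∑ k ∈ Finset.range n, R k with hSdef
    set Cn := ∑ k ∈ Finset.range n, C k with hCndef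
    have hξ : ∑ j ∈ Finset.range n, (R n • C j - R j • C n) = R n • Cn - S • C n := by
      rw [Finset.sum_sub_distrib, ← Finset.smul_sum, ← Finset.sum_smul]
    rw [Finset.sum_range_succ C, Finset.sum_range_succ R, Finset.sum_range_succ
      (fun k => B (C k) (C k) / (2 * R k)), Finset.sum_range_succ, if_pos (by omega : 0 < n),
      Finset.sum_range_succ R, hξ]
    rw [show ∀ X Y T b : ℚ, X + b - (Y + T) = (X - Y) + b - T by intros; ring, ← IH]
    have e1 : B (Cn + C n) (Cn + C n)
        = B Cn Cn + 2 * B Cn (C n) + B (C n) (C n) := by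
      simp only [map_add, LinearMap.add_apply]
      rw [hB (C n) Cn]; ring
    have e2 : B (R n • Cn - S • C n) (R n • Cn - S • C n)
        = R n ^ 2 * B Cn Cn - 2 * R n * S * B Cn (C n) + S ^ 2 * B (C n) (C n) := by
      simp only [map_sub, map_smul, LinearMap.sub_apply, LinearMap.smul_apply, smul_eq_mul]
      rw [hB (C n) Cn]; ring
    rw [e1, e2]
    have h1 : S ≠ 0 := ne_of_gt hS
    have h2 : R n ≠ 0 := ne_of_gt (hR n)
    have h3 : S + R n ≠ 0 := ne_of_gt (by linarith [hR n])
    rw [← hSdef]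
    field_simp
    ring

theorem stmt4 {V : Type*} [AddCommGroup V] [Module ℚ V]
    (B : V →ₗ[ℚ] V →ₗ[ℚ] ℚ) (hB : ∀ a b, B a b = B b a)
    (ℓ : ℕ) (γ : Fin (ℓ + 1) → ℚ × V × ℚ) (hr : ∀ i, 0 < (γ i).1) :
    (∑ i, γ i).1 * disc B (∑ i, γ i)
      = (∑ i, (γ i).1 * disc B (γ i))
        - ∑ i ∈ Finset.univ.filter (fun i : Fin (ℓ + 1) => 0 < i),
            (1 / (2 * (γ i).1))
              * (1 / ((∑ j ∈ Finset.Iic i, (γ j).1) * (∑ j ∈ Finset.Iio i, (γ j).1)))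
              * B (∑ j ∈ Finset.Iio i, ((γ i).1 • (γ j).2.1 - (γ j).1 • (γ i).2.1))
                  (∑ j ∈ Finset.Iio i, ((γ i).1 • (γ j).2.1 - (γ j).1 • (γ i).2.1)) := by
  classical
  set F : ℕ → ℚ × V × ℚ := fun k => if h : k < ℓ + 1 then γ ⟨k, h⟩ else (1, 0, 0) with hF
  set R : ℕ → ℚ := fun k => (F k).1 with hRdef
  set C : ℕ → V := fun k => (F k).2.1 with hCdef
  have hFi : ∀ i : Fin (ℓ + 1), F i.val = γ i := by
    intro i; exact dif_pos i.isLt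
  have hRi : ∀ i : Fin (ℓ + 1), R i.val = (γ i).1 := fun i => by
    rw [show R i.val = (F i.val).1 from rfl, hFi]
  have hCi : ∀ i : Fin (ℓ + 1), C i.val = (γ i).2.1 := fun i => by
    rw [show C i.val = (F i.val).2.1 from rfl, hFi]
  have hRpos : ∀ k, 0 < R k := by
    intro k
    by_cases h : k < ℓ + 1
    · simpa [hRdef, hF, (by omega : k ≤ ℓ)] using hr ⟨k, h⟩
    · show 0 < (F k).1
      rw [show F k = (1, 0, 0) from dif_neg h]
      norm_num
  -- component sums
  have hfst : (∑ i, γ i).1 = ∑ k ∈ Finset.range (ℓ + 1), R k := by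
    rw [Prod.fst_sum, ← Fin.sum_univ_eq_sum_range]
    exact Finset.sum_congr rfl fun i _ => (hRi i).symm
  have hc : (∑ i, γ i).2.1 = ∑ k ∈ Finset.range (ℓ + 1), C k := by
    rw [Prod.snd_sum, Prod.fst_sum, ← Fin.sum_univ_eq_sum_range]
    exact Finset.sum_congr rfl fun i _ => (hCi i).symm
  have hy : (∑ i, γ i).2.2 = ∑ i, (γ i).2.2 := by
    rw [Prod.snd_sum, Prod.snd_sum]
  have hrT : 0 < ∑ k ∈ Finset.range (ℓ + 1), R k :=
    Finset.sum_pos (fun k _ => hRpos k) (Finset.nonempty_range_iff.mpr (by omega))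
  -- LHS
  have hL : (∑ i, γ i).1 * disc B (∑ i, γ i)
      = B (∑ k ∈ Finset.range (ℓ + 1), C k) (∑ k ∈ Finset.range (ℓ + 1), C k)
          / (2 * ∑ k ∈ Finset.range (ℓ + 1), R k) - ∑ i, (γ i).2.2 := by
    rw [disc, hfst, hc, hy]
    have := ne_of_gt hrT
    field_simp
  -- first RHS sum
  have hR1 : (∑ i, (γ i).1 * disc B (γ i))
      = (∑ k ∈ Finset.range (ℓ + 1), B (C k) (C k) / (2 * R k)) - ∑ i, (γ i).2.2 := by
    rw [← Fin.sum_univ_eq_sum_range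
      (fun k => B (C k) (C k) / (2 * R k)), ← Finset.sum_sub_distrib]
    refine Finset.sum_congr rfl fun i _ => ?_
    show (γ i).1 * disc B (γ i) = B (C i.val) (C i.val) / (2 * R i.val) - (γ i).2.2
    rw [hRi, hCi, disc]
    have := ne_of_gt (hr i)
    field_simp
  -- correction sum
  have hcorr : ∑ i ∈ Finset.univ.filter (fun i : Fin (ℓ + 1) => 0 < i),
        (1 / (2 * (γ i).1))
          * (1 / ((∑ j ∈ Finset.Iic i, (γ j).1) * (∑ j ∈ Finset.Iio i, (γ j).1)))
          * B (∑ j ∈ Finset.Iio i, ((γ i).1 • (γ j).2.1 - (γ j).1 • (γ i).2.1))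
              (∑ j ∈ Finset.Iio i, ((γ i).1 • (γ j).2.1 - (γ j).1 • (γ i).2.1))
      = ∑ k ∈ Finset.range (ℓ + 1), (if 0 < k then
          (1 / (2 * R k)) * (1 / ((∑ j ∈ Finset.range (k + 1), R j) * (∑ j ∈ Finset.range k, R j)))
            * B (∑ j ∈ Finset.range k, (R k • C j - R j • C k))
                (∑ j ∈ Finset.range k, (R k • C j - R j • C k))
        else 0) := by
    rw [Finset.sum_filter, ← Fin.sum_univ_eq_sum_range]
    refine Finset.sum_congr rfl fun i _ => ?_
    have hpos : (0 < i) ↔ (0 < i.val) := by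
      rw [Fin.lt_def]; simp
    by_cases h : 0 < i
    · rw [if_pos h, if_pos (hpos.mp h)]
      have hIic : ∑ j ∈ Finset.Iic i, (γ j).1 = ∑ k ∈ Finset.range (i.val + 1), R k := by
        rw [← sum_Iic_fin R i]
        exact Finset.sum_congr rfl fun j _ => (hRi j).symm
      have hIio : ∑ j ∈ Finset.Iio i, (γ j).1 = ∑ k ∈ Finset.range i.val, R k := by
        rw [← sum_Iio_fin R i]
        exact Finset.sum_congr rfl fun j _ => (hRi j).symm
      have hxi : ∑ j ∈ Finset.Iio i, ((γ i).1 • (γ j).2.1 - (γ j).1 • (γ i).2.1)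
          = ∑ k ∈ Finset.range i.val, (R i.val • C k - R k • C i.val) := by
        rw [← sum_Iio_fin (fun k => R i.val • C k - R k • C i.val) i]
        refine Finset.sum_congr rfl fun j _ => ?_
        show (γ i).1 • (γ j).2.1 - (γ j).1 • (γ i).2.1 = R i.val • C j.val - R j.val • C i.val
        rw [hRi, hCi, hRi, hCi]
      rw [hIic, hIio, hxi, ← hRi i]
    · rw [if_neg h, if_neg (fun hv => h (hpos.mpr hv))]
  rw [hL, hR1, hcorr,
    key B hB R C hRpos (ℓ + 1) (by omega)]
  ring
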